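/- Let n ≥ 3 and let (s_i, s_j, s_k) be a triple of reflections in D_n. Then the Hurwitz (braid) orbit of (s_i, s_j, s_k) under the B_3-action contains a triple of the form (s_{i'}, s_{j'}, s_{j'}) (last two entries equal) and also a triple of the form (s_{i''}, s_{i''}, s_{j''}) (first two entries equal). In particular, the subgroup generated by the three reflections is generated by the first two entries of a suitable triple in the Hurwitz orbit. -/

import Mathlib

/-- One elementary braid (Hurwitz) move on a tuple of elements of a group `G`,
encoded as a list: `σᵢ` replaces the adjacent pair `(a, b)` occurring at some
position by `(a * b * a⁻¹, a)`. -/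
inductive BraidStep {G : Type*} [Group G] : List G → List G → Prop
  | head (a b : G) (t : List G) : BraidStep (a :: b :: t) (a * b * a⁻¹ :: a :: t)
  | tail (a : G) {l₁ l₂ : List G} : BraidStep l₁ l₂ → BraidStep (a :: l₁) (a :: l₂)

/-- Hurwitz (braid) equivalence: the equivalence relation generated by
elementary braid moves (so finitely many moves and their inverses). -/
def HurwitzEquiv {G : Type*} [Group G] : List G → List G → Prop :=
  Relation.EqvGen BraidStep

/-- Braid-automorphism equivalence: `v` and `w` differ by a braid move sequence
together with the diagonal action of a group automorphism. -/
def BAEquiv {G : Type*} [Group G] (v w : List G) : Prop :=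
  ∃ φ : G ≃* G, HurwitzEquiv (v.map ⇑φ) w

/-- A `G`-Hurwitz vector (genus 0): all entries nontrivial, the entries
generate `G`, and the product of the entries is `1`. -/
def IsHurwitzVector {G : Type*} [Group G] (v : List G) : Prop :=
  (∀ c ∈ v, c ≠ 1) ∧ Subgroup.closure {g | g ∈ v} = ⊤ ∧ v.prod = 1

/-- The reflection `s i = x^i * y` of the dihedral group `D_n`,
where `x = DihedralGroup.r 1` and `y = DihedralGroup.sr 0`. -/
def sD {n : ℕ} (i : ZMod n) : DihedralGroup n :=
  DihedralGroup.r i * DihedralGroup.sr 0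

/-- Being a reflection in the dihedral group. -/
def IsReflection {n : ℕ} (g : DihedralGroup n) : Prop :=
  ∃ i : ZMod n, g = DihedralGroup.sr i

/- ## Auxiliary material -/

lemma sD_eq_sr {n : ℕ} (i : ZMod n) : sD i = DihedralGroup.sr (-i) := by
  simp [sD, zero_sub]

lemma sD_inv {n : ℕ} (i : ZMod n) : (sD i)⁻¹ = sD i :=
  inv_eq_of_mul_eq_one_right (by rw [sD_eq_sr]; exact DihedralGroup.sr_mul_self _)

lemma sD_conj {n : ℕ} (i j : ZMod n) : sD i * sD j * (sD i)⁻¹ = sD (2 * i - j) := by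
  rw [sD_inv]
  simp only [sD_eq_sr, DihedralGroup.sr_mul_sr, DihedralGroup.r_mul_sr]
  congr 1
  ring

lemma HurwitzEquiv.refl' {G : Type*} [Group G] (v : List G) : HurwitzEquiv v v :=
  Relation.EqvGen.refl v

lemma HurwitzEquiv.symm' {G : Type*} [Group G] {v w : List G}
    (h : HurwitzEquiv v w) : HurwitzEquiv w v :=
  Relation.EqvGen.symm _ _ h

lemma HurwitzEquiv.trans' {G : Type*} [Group G] {u v w : List G}
    (h : HurwitzEquiv u v) (h' : HurwitzEquiv v w) : HurwitzEquiv u w :=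
  Relation.EqvGen.trans _ _ _ h h'

lemma hstep1 {n : ℕ} (i j k : ZMod n) :
    HurwitzEquiv [sD i, sD j, sD k] [sD (2 * i - j), sD i, sD k] := by
  have h : BraidStep [sD i, sD j, sD k] [sD i * sD j * (sD i)⁻¹, sD i, sD k] :=
    BraidStep.head _ _ _
  rw [sD_conj] at h
  exact Relation.EqvGen.rel _ _ h

lemma hstep2 {n : ℕ} (i j k : ZMod n) :
    HurwitzEquiv [sD i, sD j, sD k] [sD i, sD (2 * j - k), sD j] := by
  have h : BraidStep [sD i, sD j, sD k] [sD i, sD j * sD k * (sD j)⁻¹, sD j] :=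
    BraidStep.tail _ (BraidStep.head _ _ _)
  rw [sD_conj] at h
  exact Relation.EqvGen.rel _ _ h

lemma hstep1' {n : ℕ} (i j k : ZMod n) :
    HurwitzEquiv [sD i, sD j, sD k] [sD j, sD (2 * j - i), sD k] := by
  have h := hstep1 j (2 * j - i) k
  rw [show 2 * j - (2 * j - i) = i by ring] at h
  exact h.symm'

lemma hstep2' {n : ℕ} (i j k : ZMod n) :
    HurwitzEquiv [sD i, sD j, sD k] [sD i, sD k, sD (2 * k - j)] := by
  have h := hstep2 i k (2 * k - j)
  rw [show 2 * k - (2 * k - j) = j by ring] at h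
  exact h.symm'

/-- One move on index-difference pairs `(j - i, k - j)` induced by braid moves. -/
inductive PStep {n : ℕ} : ZMod n × ZMod n → ZMod n × ZMod n → Prop
  | s2 (a b : ZMod n) : PStep (a, b) (a - b, b)
  | s2' (a b : ZMod n) : PStep (a, b) (a + b, b)
  | s1 (a b : ZMod n) : PStep (a, b) (a, b + a)
  | s1' (a b : ZMod n) : PStep (a, b) (a, b - a)

def PReach {n : ℕ} : ZMod n × ZMod n → ZMod n × ZMod n → Prop :=
  Relation.ReflTransGen PStep

lemma PReach.swap {n : ℕ} {p q : ZMod n × ZMod n} (h : PReach p q) :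
    PReach p.swap q.swap := by
  induction h with
  | refl => exact Relation.ReflTransGen.refl
  | tail _ hstep ih =>
    refine Relation.ReflTransGen.tail ih ?_
    cases hstep with
    | s2 a b => exact PStep.s1' b a
    | s2' a b => exact PStep.s1 b a
    | s1 a b => exact PStep.s2' b a
    | s1' a b => exact PStep.s2 b a

lemma bridge {n : ℕ} {p q : ZMod n × ZMod n} (h : PReach p q) :
    ∀ i j k : ZMod n, j - i = p.1 → k - j = p.2 →
      ∃ i1 j1 k1 : ZMod n, HurwitzEquiv [sD i, sD j, sD k] [sD i1, sD j1, sD k1] ∧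
        j1 - i1 = q.1 ∧ k1 - j1 = q.2 := by
  induction h with
  | refl => exact fun i j k h1 h2 => ⟨i, j, k, HurwitzEquiv.refl' _, h1, h2⟩
  | tail _ hstep ih =>
    intro i j k h1 h2
    obtain ⟨i1, j1, k1, heq, ha, hb⟩ := ih i j k h1 h2
    cases hstep with
    | s2 a b =>
      refine ⟨i1, 2 * j1 - k1, j1, heq.trans' (hstep2 i1 j1 k1), ?_, ?_⟩ <;>
        simp only at ha hb ⊢
      · linear_combination ha - hb
      · linear_combination hb
    | s2' a b =>
      refine ⟨i1, k1, 2 * k1 - j1, heq.trans' (hstep2' i1 j1 k1), ?_, ?_⟩ <;>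
        simp only at ha hb ⊢
      · linear_combination ha + hb
      · linear_combination hb
    | s1 a b =>
      refine ⟨2 * i1 - j1, i1, k1, heq.trans' (hstep1 i1 j1 k1), ?_, ?_⟩ <;>
        simp only at ha hb ⊢
      · linear_combination ha
      · linear_combination ha + hb
    | s1' a b =>
      refine ⟨j1, 2 * j1 - i1, k1, heq.trans' (hstep1' i1 j1 k1), ?_, ?_⟩ <;>
        simp only at ha hb ⊢
      · linear_combination ha
      · linear_combination hb - ha

lemma subMany {n : ℕ} (q : ℕ) (a b : ZMod n) : PReach (a, b) (a - q * b, b) := by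
  induction q with
  | zero => simp only [Nat.cast_zero, zero_mul, sub_zero]; exact Relation.ReflTransGen.refl
  | succ m ih =>
    refine Relation.ReflTransGen.tail ih ?_
    have : (a - m * b) - b = a - (m + 1 : ℕ) * b := by push_cast; ring
    rw [← this]
    exact PStep.s2 _ _
  
lemma subMany' {n : ℕ} (q : ℕ) (a b : ZMod n) : PReach (a, b) (a, b - q * a) := by
  have h := (subMany q b a).swap
  simpa using h

lemma mod_step {n : ℕ} [NeZero n] (a b : ZMod n) :
    a - ((a.val / b.val : ℕ) : ZMod n) * b = ((a.val % b.val : ℕ) : ZMod n) := by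
  have hva : ((a.val : ℕ) : ZMod n) = a := ZMod.natCast_rightInverse a
  have hvb : ((b.val : ℕ) : ZMod n) = b := ZMod.natCast_rightInverse b
  have key : ((a.val % b.val + a.val / b.val * b.val : ℕ) : ZMod n) = a := by
    rw [Nat.mod_add_div', hva]
  push_cast [hvb] at key
  linear_combination -key

lemma euclid {n : ℕ} (hn : 0 < n) : ∀ m : ℕ, ∀ a b : ZMod n, b.val ≤ m →
    ∃ g : ZMod n, PReach (a, b) (g, 0) := by
  haveI : NeZero n := ⟨hn.ne'⟩
  intro m
  induction m using Nat.strong_induction_on with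
  | _ m IH =>
    intro a b hbm
    by_cases hb : b = 0
    · exact ⟨a, hb ▸ Relation.ReflTransGen.refl⟩
    · have hbv : 0 < b.val := Nat.pos_of_ne_zero fun h => hb ((ZMod.val_eq_zero b).mp h)
      set a' : ZMod n := ((a.val % b.val : ℕ) : ZMod n) with ha'
      have hsub : PReach (a, b) (a', b) := by
        have h := subMany (a.val / b.val) a b
        rwa [mod_step] at h
      have ha'v : a'.val = a.val % b.val := by
        rw [ha', ZMod.val_natCast_of_lt]
        exact lt_of_lt_of_le (Nat.mod_lt _ hbv) (le_of_lt (ZMod.val_lt b))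
      by_cases ha0 : a' = 0
      · refine ⟨b, ?_⟩
        rw [ha0] at hsub
        have st1 : PStep ((0:ZMod n), b) (b, b) := by
          have h := PStep.s2' (0:ZMod n) b; rwa [zero_add] at h
        have st2 : PStep ((b:ZMod n), b) (b, 0) := by
          have h := PStep.s1' b b; rwa [sub_self] at h
        exact hsub.trans (Relation.ReflTransGen.head st1 (Relation.ReflTransGen.single st2))
      · set b' : ZMod n := ((b.val % a'.val : ℕ) : ZMod n) with hb'
        have ha'v0 : 0 < a'.val := Nat.pos_of_ne_zero fun h => ha0 ((ZMod.val_eq_zero a').mp h)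
        have hsub2 : PReach (a', b) (a', b') := by
          have h := subMany' (b.val / a'.val) a' b
          rwa [mod_step] at h
        have hb'v : b'.val = b.val % a'.val := by
          rw [hb', ZMod.val_natCast_of_lt]
          exact lt_of_lt_of_le (Nat.mod_lt _ ha'v0) (le_of_lt (ZMod.val_lt a'))
        have hlt : b'.val < m := by
          have h1 : b.val % a'.val < a'.val := Nat.mod_lt _ ha'v0
          have h2 : a'.val < b.val := ha'v ▸ Nat.mod_lt _ hbv
          omega
        obtain ⟨g, hg⟩ := IH b'.val hlt a' b' le_rfl
        exact ⟨g, (hsub.trans hsub2).trans hg⟩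

lemma closure_of_braidStep {G : Type*} [Group G] {v w : List G} (h : BraidStep v w) :
    Subgroup.closure {g | g ∈ v} = Subgroup.closure {g | g ∈ w} := by
  induction h with
  | head a b t =>
    apply le_antisymm <;> rw [Subgroup.closure_le] <;> intro x hx
    · simp only [List.mem_cons, Set.mem_setOf_eq] at hx
      rcases hx with rfl | rfl | hx
      · exact Subgroup.subset_closure (by simp)
      · have ha : a ∈ Subgroup.closure {g | g ∈ a * x * a⁻¹ :: a :: t} :=
          Subgroup.subset_closure (by simp)
        have hc : a * x * a⁻¹ ∈ Subgroup.closure {g | g ∈ a * x * a⁻¹ :: a :: t} :=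
          Subgroup.subset_closure (by simp)
        have hmem : a⁻¹ * (a * x * a⁻¹) * a ∈
            Subgroup.closure {g | g ∈ a * x * a⁻¹ :: a :: t} :=
          mul_mem (mul_mem (inv_mem ha) hc) ha
        rw [SetLike.mem_coe]
        convert hmem using 1
        group
      · exact Subgroup.subset_closure (by simp [hx])
    · simp only [List.mem_cons, Set.mem_setOf_eq] at hx
      rcases hx with rfl | rfl | hx
      · have ha : a ∈ Subgroup.closure {g | g ∈ a :: b :: t} :=
          Subgroup.subset_closure (by simp)
        have hb : b ∈ Subgroup.closure {g | g ∈ a :: b :: t} :=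
          Subgroup.subset_closure (by simp)
        exact mul_mem (mul_mem ha hb) (inv_mem ha)
      · exact Subgroup.subset_closure (by simp)
      · exact Subgroup.subset_closure (by simp [hx])
  | @tail a l₁ l₂ hstep ih =>
    have e : ∀ (l : List G), {g | g ∈ a :: l} = insert a {g | g ∈ l} := by
      intro l; ext x; simp
    rw [e l₁, e l₂, Set.insert_eq, Set.insert_eq, Subgroup.closure_union,
      Subgroup.closure_union, ih]

lemma closure_of_hurwitzEquiv {G : Type*} [Group G] {v w : List G} (h : HurwitzEquiv v w) :
    Subgroup.closure {g | g ∈ v} = Subgroup.closure {g | g ∈ w} := by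
  induction h with
  | rel _ _ hs => exact closure_of_braidStep hs
  | refl => rfl
  | symm _ _ _ ih => exact ih.symm
  | trans _ _ _ _ _ ih1 ih2 => exact ih1.trans ih2

/-- normalization of reflection triples.  The Hurwitz orbit of a triple of
reflections `(s_i, s_j, s_k)` in `D_n` contains a triple whose last two entries are equal and
a triple whose first two entries are equal; in particular the subgroup generated by the three
reflections is generated by the first two entries of a suitable triple in the Hurwitz orbit. -/
theorem reflection_triple_normalization (n : ℕ) (hn : 3 ≤ n) (i j k : ZMod n) :
    (∃ i' j' : ZMod n,
      HurwitzEquiv [sD i, sD j, sD k] [sD i', sD j', sD j']) ∧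
    (∃ i'' j'' : ZMod n,
      HurwitzEquiv [sD i, sD j, sD k] [sD i'', sD i'', sD j'']) ∧
    (∃ a b c : ZMod n,
      HurwitzEquiv [sD i, sD j, sD k] [sD a, sD b, sD c] ∧
      Subgroup.closure ({sD i, sD j, sD k} : Set (DihedralGroup n)) =
        Subgroup.closure ({sD a, sD b} : Set (DihedralGroup n))) := by
  have hn0 : 0 < n := by omega
  -- Part 1: last two equal
  obtain ⟨g, hg⟩ := euclid hn0 (k - j).val (j - i) (k - j) le_rfl
  obtain ⟨i1, j1, k1, heq1, _, hb1⟩ := bridge hg i j k rfl rfl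
  have hk1 : k1 = j1 := sub_eq_zero.mp hb1
  subst hk1
  -- Part 2: first two equal
  obtain ⟨g2, hg2⟩ := euclid hn0 (j - i).val (k - j) (j - i) le_rfl
  have hg2' : PReach ((j - i, k - j) : ZMod n × ZMod n) (0, g2) := hg2.swap
  obtain ⟨i2, j2, k2, heq2, ha2, _⟩ := bridge hg2' i j k rfl rfl
  have hj2 : j2 = i2 := sub_eq_zero.mp ha2
  subst hj2
  refine ⟨⟨i1, k1, heq1⟩, ⟨j2, k2, heq2⟩, i1, k1, k1, heq1, ?_⟩
  have hcl := closure_of_hurwitzEquiv heq1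
  have e1 : {g | g ∈ [sD i, sD j, sD k]} = ({sD i, sD j, sD k} : Set (DihedralGroup n)) := by
    ext x; simp
  have e2 : {g | g ∈ [sD i1, sD k1, sD k1]} = ({sD i1, sD k1} : Set (DihedralGroup n)) := by
    ext x
    simp only [List.mem_cons, List.not_mem_nil, or_false, Set.mem_setOf_eq,
      Set.mem_insert_iff, Set.mem_singleton_iff]
    tauto
  rw [e1, e2] at hcl
  exact hcl
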